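/- Let L, ν be natural numbers with ν+1 < L, h ∈ ℂ^L, f ∈ ℂ^{ν+1}, and N0 > 0; take σ = 1 (so that M̃ = M), and define ε₁ = (1/2π)∫_{−π}^{π} M(ω)·conj(F(ω))·φ(ω) dω and ε₂ = (1/2π)∫_{−π}^{π} (M(ω)·|F(ω)|²/(1+|F(ω)|²))·φ(ω)·φ(ω)† dω. Assume ε₂ is negative definite (hence invertible). Suppose there exist a measurable W : [−π,π] → ℂ and b₀ ∈ ℂ^{L−ν−1} such that, with B₀(ω) = Σ_{j=0}^{L−ν−2} (b₀)_j e^{iω(ν+1+j)}, one has |W(ω)|²·N0 = 1 and W(ω)·H(ω) = F(ω) + B₀(ω) for all ω ∈ [−π,π]. Then ε₁†·ε₂⁻¹·ε₁ − (1/2π)∫_{−π}^{π} M(ω)·(1+|F(ω)|²) dω ≤ 1. -/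

import Mathlib

open Complex Real MeasureTheory Matrix
open scoped ComplexOrder

/-- DTFT of the channel taps `h ∈ ℂ^L`. -/
noncomputable def Hdtft {L : ℕ} (h : Fin L → ℂ) (ω : ℝ) : ℂ :=
  ∑ ℓ : Fin L, h ℓ * Complex.exp (Complex.I * (ω : ℂ) * ((ℓ : ℕ) : ℂ))

/-- DTFT of the target-response taps `f ∈ ℂ^{ν+1}`. -/
noncomputable def Fdtft {ν : ℕ} (f : Fin (ν + 1) → ℂ) (ω : ℝ) : ℂ :=
  ∑ k : Fin (ν + 1), f k * Complex.exp (Complex.I * (ω : ℂ) * ((k : ℕ) : ℂ))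

/-- DTFT of feedback taps `b₀ ∈ ℂ^{L−ν−1}` (supported on taps ν+1,…,L−1). -/
noncomputable def Bdtft {L ν : ℕ} (b : Fin (L - ν - 1) → ℂ) (ω : ℝ) : ℂ :=
  ∑ j : Fin (L - ν - 1), b j * Complex.exp (Complex.I * (ω : ℂ) * ((ν + 1 + (j : ℕ) : ℕ) : ℂ))

/-- The LMMSE kernel `M(ω) = −N0/(N0+|H(ω)|²)`. -/
noncomputable def Mker (N0 : ℝ) (H : ℝ → ℂ) (ω : ℝ) : ℝ :=
  -N0 / (N0 + ‖H ω‖ ^ 2)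

/-- The exponential vector `φ(ω) = (e^{iω(ν+1)},…,e^{iω(L−1)})ᵀ`. -/
noncomputable def phiVec (L ν : ℕ) (j : Fin (L - ν - 1)) (ω : ℝ) : ℂ :=
  Complex.exp (Complex.I * (ω : ℂ) * ((ν + 1 + (j : ℕ) : ℕ) : ℂ))

/-- With σ = 1 (so `M̃ = M`): `ε₁ = (1/2π)∫ M conj(F) φ dω`. -/
noncomputable def eps1 (L ν : ℕ) (N0 : ℝ) (H F : ℝ → ℂ) (j : Fin (L - ν - 1)) : ℂ :=
  ((1 / (2 * π) : ℝ) : ℂ) *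
    ∫ ω in (-π)..π, ((Mker N0 H ω : ℝ) : ℂ) * (starRingEnd ℂ) (F ω) * phiVec L ν j ω

/-- With σ = 1: `ε₂ = (1/2π)∫ (M|F|²/(1+|F|²)) φ φ† dω`. -/
noncomputable def eps2 (L ν : ℕ) (N0 : ℝ) (H F : ℝ → ℂ) :
    Matrix (Fin (L - ν - 1)) (Fin (L - ν - 1)) ℂ := fun j k =>
  ((1 / (2 * π) : ℝ) : ℂ) *
    ∫ ω in (-π)..π,
      ((Mker N0 H ω * ‖F ω‖ ^ 2 / (1 + ‖F ω‖ ^ 2) : ℝ) : ℂ) *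
        (phiVec L ν j ω * (starRingEnd ℂ) (phiVec L ν k ω))

/- ----------------- auxiliary lemmas ----------------- -/

lemma quad_bound {n : Type*} [Fintype n] [DecidableEq n] (E : Matrix n n ℂ)
    (hE : (-E).PosDef) (e v : n → ℂ) :
    (star e ⬝ᵥ E⁻¹.mulVec e).re ≤ 2 * (star v ⬝ᵥ e).re - (star v ⬝ᵥ E.mulVec v).re := by
  set A := -E with hA
  have hdet : IsUnit A.det := hE.det_pos.ne'.isUnit
  have hinv : A * A⁻¹ = 1 := A.mul_nonsing_inv hdet
  have hinv' : A⁻¹ * A = 1 := A.nonsing_inv_mul hdet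
  have hEinv : E⁻¹ = -A⁻¹ := by
    apply Matrix.inv_eq_right_inv
    have : E * -A⁻¹ = A * A⁻¹ := by rw [hA]; noncomm_ring
    rw [this, hinv]
  have hherm : A⁻¹ᴴ = A⁻¹ := hE.isHermitian.inv
  have h0 := hE.posSemidef.re_dotProduct_nonneg (v + A⁻¹.mulVec e)
  have expand : star (v + A⁻¹.mulVec e) ⬝ᵥ A.mulVec (v + A⁻¹.mulVec e) =
      star v ⬝ᵥ A.mulVec v + star v ⬝ᵥ e + star e ⬝ᵥ v + star e ⬝ᵥ A⁻¹.mulVec e := by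
    rw [Matrix.mulVec_add, star_add]
    have t1 : A.mulVec (A⁻¹.mulVec e) = e := by
      rw [Matrix.mulVec_mulVec, hinv, Matrix.one_mulVec]
    have t2 : star (A⁻¹.mulVec e) ⬝ᵥ A.mulVec v = star e ⬝ᵥ v := by
      rw [Matrix.star_mulVec, hherm, ← Matrix.dotProduct_mulVec,
        Matrix.mulVec_mulVec, hinv', Matrix.one_mulVec]
    have t3 : star (A⁻¹.mulVec e) ⬝ᵥ e = star e ⬝ᵥ A⁻¹.mulVec e := by
      rw [Matrix.star_mulVec, hherm, ← Matrix.dotProduct_mulVec]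
    simp only [t1, dotProduct_add, add_dotProduct, t2, t3]
    ring
  have hconj : star e ⬝ᵥ v = starRingEnd ℂ (star v ⬝ᵥ e) := by
    simp [dotProduct, map_sum, mul_comm]
  rw [expand] at h0
  simp only [RCLike.re_to_complex] at h0
  have hre : (star e ⬝ᵥ v).re = (star v ⬝ᵥ e).re := by rw [hconj, Complex.conj_re]
  have h1 : (star v ⬝ᵥ A.mulVec v).re = -(star v ⬝ᵥ E.mulVec v).re := by
    rw [hA, Matrix.neg_mulVec, dotProduct_neg, Complex.neg_re]
  have h2 : (star e ⬝ᵥ E⁻¹.mulVec e).re = -(star e ⬝ᵥ A⁻¹.mulVec e).re := by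
    rw [hEinv, Matrix.neg_mulVec, dotProduct_neg, Complex.neg_re]
  simp only [Complex.add_re] at h0
  rw [h1] at h0
  rw [h2]
  linarith [h0, hre]

lemma cont_cexp (n : ℕ) : Continuous fun ω : ℝ => Complex.exp (Complex.I * (ω : ℂ) * (n : ℂ)) :=
  Complex.continuous_exp.comp (by continuity)

lemma cont_Hdtft {L : ℕ} (h : Fin L → ℂ) : Continuous (Hdtft h) :=
  continuous_finset_sum _ fun ℓ _ => continuous_const.mul (cont_cexp ℓ)

lemma cont_Fdtft {ν : ℕ} (f : Fin (ν + 1) → ℂ) : Continuous (Fdtft f) :=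
  continuous_finset_sum _ fun k _ => continuous_const.mul (cont_cexp k)

lemma cont_Bdtft {L ν : ℕ} (b : Fin (L - ν - 1) → ℂ) : Continuous (Bdtft (L := L) (ν := ν) b) :=
  continuous_finset_sum _ fun j _ => continuous_const.mul (cont_cexp _)

lemma cont_phiVec (L ν : ℕ) (j : Fin (L - ν - 1)) : Continuous (phiVec L ν j) :=
  cont_cexp _

lemma cont_Mker (N0 : ℝ) (hN0 : 0 < N0) (H : ℝ → ℂ) (hH : Continuous H) :
    Continuous (Mker N0 H) := by
  apply Continuous.div continuous_const
    (continuous_const.add ((continuous_norm.comp hH).pow 2))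
  intro ω
  simp only [Pi.add_apply, Pi.pow_apply, Function.comp_apply]
  positivity

lemma sum_mul_integral {n : ℕ} (g : Fin n → ℝ → ℂ) (c : Fin n → ℂ)
    (hg : ∀ j, Continuous (g j)) :
    ∑ j, c j * ∫ ω in (-π)..π, g j ω = ∫ ω in (-π)..π, ∑ j, c j * g j ω := by
  rw [intervalIntegral.integral_finset_sum (fun j _ =>
    Continuous.intervalIntegrable (u := fun ω => c j * g j ω) (continuous_const.mul (hg j)) _ _)]
  exact Finset.sum_congr rfl fun j _ => (intervalIntegral.integral_const_mul (c j) (g j)).symm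

lemma re_integral (g : ℝ → ℂ) (hg : Continuous g) :
    (∫ ω in (-π)..π, g ω).re = ∫ ω in (-π)..π, (g ω).re := by
  have := Complex.reCLM.intervalIntegral_comp_comm (hg.intervalIntegrable (μ := volume) (-π) π)
  simpa using this.symm

lemma arith_bound (a bb r M : ℝ) (ha : 0 ≤ a) (hbb : 0 ≤ bb) (hS : 0 ≤ a + bb + 2 * r)
    (hM : M = -1 / (1 + (a + bb + 2 * r))) :
    2 * (M * -r) - M * a / (1 + a) * bb - M * (1 + a) ≤ 1 := by
  subst hM
  have h1a : (0:ℝ) < 1 + a := by linarith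
  have h1S : (0:ℝ) < 1 + (a + bb + 2 * r) := by linarith
  rw [← sub_nonneg]
  have key : 1 - (2 * (-1 / (1 + (a + bb + 2 * r)) * -r) -
      -1 / (1 + (a + bb + 2 * r)) * a / (1 + a) * bb -
      -1 / (1 + (a + bb + 2 * r)) * (1 + a)) = bb / ((1 + a) * (1 + (a + bb + 2 * r))) := by
    field_simp
    ring
  rw [key]
  exact div_nonneg hbb (le_of_lt (mul_pos h1a h1S))

/-- Corollary 1 of the paper: if `F` arises as the ν-tap truncation of a whitened
(minimum-phase equivalent) channel, then `ε₁†ε₂⁻¹ε₁ − (1/2π)∫M(1+|F|²) ≤ 1`. -/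
theorem stmt14 (L ν : ℕ) (hLν : ν + 1 < L) (h : Fin L → ℂ) (f : Fin (ν + 1) → ℂ)
    (N0 : ℝ) (hN0 : 0 < N0)
    (hNegDef : (-(eps2 L ν N0 (Hdtft h) (Fdtft f))).PosDef)
    (hexists : ∃ (W : ℝ → ℂ) (b₀ : Fin (L - ν - 1) → ℂ), Measurable W ∧
      ∀ ω ∈ Set.Icc (-π) π,
        ‖W ω‖ ^ 2 * N0 = 1 ∧
        W ω * Hdtft h ω = Fdtft f ω + Bdtft (L := L) (ν := ν) b₀ ω) :
    (star (eps1 L ν N0 (Hdtft h) (Fdtft f)) ⬝ᵥ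
        (eps2 L ν N0 (Hdtft h) (Fdtft f))⁻¹.mulVec (eps1 L ν N0 (Hdtft h) (Fdtft f))).re -
      (1 / (2 * π)) *
        ∫ ω in (-π)..π, Mker N0 (Hdtft h) ω * (1 + ‖Fdtft f ω‖ ^ 2) ≤ 1 := by
  obtain ⟨W, b₀, -, hprop⟩ := hexists
  set Hf : ℝ → ℂ := Hdtft h with hHf
  set Ff : ℝ → ℂ := Fdtft f with hFf
  set Bf : ℝ → ℂ := Bdtft (L := L) (ν := ν) b₀ with hBf
  have cHf : Continuous Hf := cont_Hdtft h
  have cFf : Continuous Ff := cont_Fdtft f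
  have cBf : Continuous Bf := cont_Bdtft b₀
  have cMf : Continuous (Mker N0 Hf) := cont_Mker N0 hN0 Hf cHf
  set e : Fin (L - ν - 1) → ℂ := eps1 L ν N0 Hf Ff with he
  set E : Matrix (Fin (L - ν - 1)) (Fin (L - ν - 1)) ℂ := eps2 L ν N0 Hf Ff with hE
  set v : Fin (L - ν - 1) → ℂ := fun j => -((starRingEnd ℂ) (b₀ j)) with hv
  set c : ℂ := ((1 / (2 * π) : ℝ) : ℂ) with hc
  -- the scalar weight of eps2
  set w : ℝ → ℝ := fun ω =>
    Mker N0 Hf ω * ‖Ff ω‖ ^ 2 / (1 + ‖Ff ω‖ ^ 2) with hw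
  have cw : Continuous w := by
    apply Continuous.div ((cMf.mul ((continuous_norm.comp cFf).pow 2)))
      (continuous_const.add ((continuous_norm.comp cFf).pow 2))
    intro ω; simp only [Pi.add_apply, Pi.pow_apply, Function.comp_apply]; positivity
  -- step 1: quadratic bound
  have step1 := quad_bound E hNegDef e v
  -- step 2: linear term as integral
  have hlin : star v ⬝ᵥ e =
      c * ∫ ω in (-π)..π, ((Mker N0 Hf ω : ℝ) : ℂ) * (starRingEnd ℂ) (Ff ω) * (-(Bf ω)) := by
    have h1 : star v ⬝ᵥ e = c * ∑ j, (-(b₀ j)) *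
        ∫ ω in (-π)..π, ((Mker N0 Hf ω : ℝ) : ℂ) * (starRingEnd ℂ) (Ff ω) * phiVec L ν j ω := by
      simp only [dotProduct, he, eps1, hv, Pi.star_apply, star_neg, RingHom.star_def,
        RingHomCompTriple.comp_apply, Complex.conj_conj, Finset.mul_sum]
      exact Finset.sum_congr rfl fun j _ => by rw [hc]; simp only [Complex.star_def, Complex.conj_conj]; push_cast; ring
    rw [h1, sum_mul_integral _ _ (fun j => by
      exact ((Complex.continuous_ofReal.comp cMf).mul
        (Complex.continuous_conj.comp cFf)).mul (cont_phiVec L ν j))]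
    congr 1
    apply intervalIntegral.integral_congr
    intro ω _
    simp only [Bdtft, phiVec, hBf, mul_neg, Finset.mul_sum, neg_mul, ← Finset.sum_neg_distrib]
    exact Finset.sum_congr rfl fun j _ => by ring
  -- step 3: quadratic term as integral
  -- step 3: quadratic term as integral
  have hinner : ∀ j, E.mulVec v j =
      c * ∫ ω in (-π)..π, ((w ω : ℝ) : ℂ) * phiVec L ν j ω * (-((starRingEnd ℂ) (Bf ω))) := by
    intro j
    have h1 : E.mulVec v j = c * ∑ k, (-((starRingEnd ℂ) (b₀ k))) *
        ∫ ω in (-π)..π, ((w ω : ℝ) : ℂ) * (phiVec L ν j ω * (starRingEnd ℂ) (phiVec L ν k ω)) := by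
      simp only [Matrix.mulVec, dotProduct, hE, eps2, hv, Finset.mul_sum, hw]
      exact Finset.sum_congr rfl fun k _ => by rw [hc]; push_cast; ring
    rw [h1, sum_mul_integral _ _ (fun k => by
      exact (Complex.continuous_ofReal.comp cw).mul
        ((cont_phiVec L ν j).mul (Complex.continuous_conj.comp (cont_phiVec L ν k))))]
    congr 1
    apply intervalIntegral.integral_congr
    intro ω _
    simp only [hBf, Bdtft, phiVec, map_sum, _root_.map_mul, mul_neg, neg_mul, Finset.mul_sum,
      ← Finset.sum_neg_distrib]
    exact Finset.sum_congr rfl fun k _ => by ring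
  have hquad : star v ⬝ᵥ E.mulVec v =
      c * ∫ ω in (-π)..π, ((w ω : ℝ) : ℂ) * (Bf ω * (starRingEnd ℂ) (Bf ω)) := by
    have h2 : star v ⬝ᵥ E.mulVec v = c * ∑ j, (-(b₀ j)) *
        ∫ ω in (-π)..π, ((w ω : ℝ) : ℂ) * phiVec L ν j ω * (-((starRingEnd ℂ) (Bf ω))) := by
      simp only [dotProduct, Finset.mul_sum]
      refine Finset.sum_congr rfl fun j _ => ?_
      rw [hinner j]
      simp only [hv, Pi.star_apply, star_neg, Complex.star_def, Complex.conj_conj]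
      ring
    rw [h2, sum_mul_integral _ _ (fun j => by
      exact ((Complex.continuous_ofReal.comp cw).mul (cont_phiVec L ν j)).mul
        (Complex.continuous_conj.comp cBf).neg)]
    congr 1
    apply intervalIntegral.integral_congr
    intro ω _
    simp only [hBf, Bdtft, phiVec, mul_neg, neg_mul, neg_neg, Finset.mul_sum, Finset.sum_mul]
    exact Finset.sum_congr rfl fun j _ => by ring
  -- real integrands
  set p1 : ℝ → ℝ := fun ω =>
    (((Mker N0 Hf ω : ℝ) : ℂ) * (starRingEnd ℂ) (Ff ω) * (-(Bf ω))).re with hp1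
  set p2 : ℝ → ℝ := fun ω => (((w ω : ℝ) : ℂ) * (Bf ω * (starRingEnd ℂ) (Bf ω))).re with hp2
  set p3 : ℝ → ℝ := fun ω => Mker N0 Hf ω * (1 + ‖Ff ω‖ ^ 2) with hp3
  have cg1 : Continuous fun ω => ((Mker N0 Hf ω : ℝ) : ℂ) * (starRingEnd ℂ) (Ff ω) * (-(Bf ω)) :=
    ((Complex.continuous_ofReal.comp cMf).mul (Complex.continuous_conj.comp cFf)).mul cBf.neg
  have cg2 : Continuous fun ω => ((w ω : ℝ) : ℂ) * (Bf ω * (starRingEnd ℂ) (Bf ω)) :=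
    (Complex.continuous_ofReal.comp cw).mul (cBf.mul (Complex.continuous_conj.comp cBf))
  have cp1 : Continuous p1 := Complex.continuous_re.comp cg1
  have cp2 : Continuous p2 := Complex.continuous_re.comp cg2
  have cp3 : Continuous p3 :=
    cMf.mul (continuous_const.add ((continuous_norm.comp cFf).pow 2))
  have hre1 : (star v ⬝ᵥ e).re = (1 / (2 * π)) * ∫ ω in (-π)..π, p1 ω := by
    rw [hlin, hc, Complex.re_ofReal_mul, re_integral _ cg1]
  have hre2 : (star v ⬝ᵥ E.mulVec v).re = (1 / (2 * π)) * ∫ ω in (-π)..π, p2 ω := by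
    rw [hquad, hc, Complex.re_ofReal_mul, re_integral _ cg2]
  -- pointwise bound
  have hpt : ∀ ω ∈ Set.Icc (-π) π, 2 * p1 ω - p2 ω - p3 ω ≤ 1 := by
    intro ω hω
    obtain ⟨hW1, hW2⟩ := hprop ω hω
    have habsH : ‖Hf ω‖ ^ 2 = N0 * ‖Ff ω + Bf ω‖ ^ 2 := by
      have h1 : ‖W ω‖ ^ 2 * ‖Hf ω‖ ^ 2
          = ‖Ff ω + Bf ω‖ ^ 2 := by
        rw [← mul_pow, ← norm_mul, hW2]
      calc ‖Hf ω‖ ^ 2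
          = (‖W ω‖ ^ 2 * N0) * ‖Hf ω‖ ^ 2 := by rw [hW1, one_mul]
        _ = N0 * (‖W ω‖ ^ 2 * ‖Hf ω‖ ^ 2) := by ring
        _ = N0 * ‖Ff ω + Bf ω‖ ^ 2 := by rw [h1]
    have hM : Mker N0 Hf ω = -1 / (1 + ‖Ff ω + Bf ω‖ ^ 2) := by
      simp only [Mker]
      rw [habsH, div_eq_div_iff (by positivity) (by positivity)]
      ring
    have hsq : ‖Ff ω + Bf ω‖ ^ 2 = ‖Ff ω‖ ^ 2
        + Complex.normSq (Bf ω) + 2 * ((Ff ω) * (starRingEnd ℂ) (Bf ω)).re := by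
      simp only [Complex.sq_norm]
      exact Complex.normSq_add _ _
    have e1 : p1 ω = Mker N0 Hf ω * -((Ff ω * (starRingEnd ℂ) (Bf ω)).re) := by
      simp only [hp1]
      rw [mul_assoc, Complex.re_ofReal_mul]
      congr 1
      rw [mul_neg, Complex.neg_re]
      congr 1
      have hcc : (starRingEnd ℂ) (Ff ω) * Bf ω
          = (starRingEnd ℂ) (Ff ω * (starRingEnd ℂ) (Bf ω)) := by
        rw [_root_.map_mul, Complex.conj_conj]
      rw [hcc, Complex.conj_re]
    have e2 : p2 ω = Mker N0 Hf ω * ‖Ff ω‖ ^ 2 / (1 + ‖Ff ω‖ ^ 2)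
        * Complex.normSq (Bf ω) := by
      simp only [hp2]
      rw [Complex.mul_conj, ← Complex.ofReal_mul, Complex.ofReal_re, hw]
    have hMr : Mker N0 Hf ω = -1 / (1 + (‖Ff ω‖ ^ 2 + Complex.normSq (Bf ω)
        + 2 * ((Ff ω) * (starRingEnd ℂ) (Bf ω)).re)) := by rw [hM, hsq]
    have hS : 0 ≤ ‖Ff ω‖ ^ 2 + Complex.normSq (Bf ω)
        + 2 * ((Ff ω) * (starRingEnd ℂ) (Bf ω)).re := by
      rw [← hsq]; positivity
    rw [e1, e2, hp3]
    exact arith_bound _ _ _ _ (by positivity) (Complex.normSq_nonneg _) hS hMr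
  -- put everything together
  have hint : ∫ ω in (-π)..π, (2 * p1 ω - p2 ω - p3 ω) =
      2 * (∫ ω in (-π)..π, p1 ω) - (∫ ω in (-π)..π, p2 ω) - ∫ ω in (-π)..π, p3 ω := by
    rw [intervalIntegral.integral_sub (Continuous.intervalIntegrable (u := fun ω => 2 * p1 ω - p2 ω) ((continuous_const.mul cp1).sub cp2) (-π) π)
        (cp3.intervalIntegrable (-π) π), intervalIntegral.integral_sub
        (Continuous.intervalIntegrable (u := fun ω => 2 * p1 ω) (continuous_const.mul cp1) (-π) π) (cp2.intervalIntegrable (-π) π),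
      intervalIntegral.integral_const_mul]
  have hmono : ∫ ω in (-π)..π, (2 * p1 ω - p2 ω - p3 ω) ≤ 2 * π := by
    have h1 : ∫ ω in (-π)..π, (2 * p1 ω - p2 ω - p3 ω) ≤ ∫ _ω in (-π)..π, (1 : ℝ) := by
      apply intervalIntegral.integral_mono_on (by linarith [pi_pos])
        (((continuous_const.mul cp1).sub cp2 |>.sub cp3).intervalIntegrable (-π) π)
        intervalIntegrable_const hpt
    simp at h1
    linarith
  have hπ : 0 < 2 * π := by positivity
  calc (star e ⬝ᵥ E⁻¹.mulVec e).re - (1 / (2 * π)) * ∫ ω in (-π)..π, p3 ω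
      ≤ (2 * (star v ⬝ᵥ e).re - (star v ⬝ᵥ E.mulVec v).re)
        - (1 / (2 * π)) * ∫ ω in (-π)..π, p3 ω := by linarith [step1]
    _ = (1 / (2 * π)) * ∫ ω in (-π)..π, (2 * p1 ω - p2 ω - p3 ω) := by
        rw [hre1, hre2, hint]; ring
    _ ≤ (1 / (2 * π)) * (2 * π) := by
        exact mul_le_mul_of_nonneg_left hmono (by positivity)
    _ = 1 := by field_simp
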